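/- arXiv:2306.15303 — 5 statements merged into one kernel-verified Lean document; each statement's English description precedes it below -/
import Mathlib

section
/- For a positive definite Hermitian matrix E, the trace of the inverse of its diagonal part is at most the trace of its inverse: tr((E ∘ I)⁻¹) ≤ tr(E⁻¹), where E ∘ I denotes the diagonal matrix with the same diagonal entries as E. -/
open Matrix
open scoped ComplexOrder

/-- The inner product core induced by a positive definite matrix. -/
noncomputable def posDefCore {n : ℕ} {M : Matrix (Fin n) (Fin n) ℂ} (hM : M.PosDef) :
    InnerProductSpace.Core ℂ (Fin n → ℂ) where
  inner := fun x y => dotProduct (star x) (M *ᵥ y)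
  conj_inner_symm := fun x y => by
    rw [star_dotProduct, starRingEnd_apply, star_star, star_mulVec, dotProduct_mulVec,
      hM.isHermitian.eq]
  re_inner_nonneg := fun x => by
    by_cases h : x = 0
    · simp [h]
    · exact le_of_lt (hM.re_dotProduct_pos h)
  definite := fun x (hx : dotProduct _ _ = 0) => by
    by_contra! h
    simpa [hx, lt_irrefl] using hM.re_dotProduct_pos h
  add_left := by simp only [star_add, add_dotProduct, forall_const, implies_true]
  smul_left := fun x y r => by
    rw [← smul_eq_mul, ← smul_dotProduct, starRingEnd_apply, ← star_smul]

/-- Key lemma: `1 ≤ (E i i).re * ((E⁻¹) i i).re` for a positive definite matrix. -/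
theorem one_le_diag_mul_inv_diag {n : ℕ} {E : Matrix (Fin n) (Fin n) ℂ}
    (hE : E.PosDef) (i : Fin n) : 1 ≤ (E i i).re * ((E⁻¹) i i).re := by
  have hu : E * E⁻¹ = 1 := Matrix.mul_nonsing_inv E (Matrix.isUnit_iff_isUnit_det E |>.1 hE.isUnit)
  set c : InnerProductSpace.Core ℂ (Fin n → ℂ) := posDefCore hE with hc
  let e : Fin n → ℂ := Pi.single i 1
  let v : Fin n → ℂ := E⁻¹ *ᵥ e
  have hEv : E *ᵥ v = e := by
    rw [Matrix.mulVec_mulVec, hu, Matrix.one_mulVec]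
  have h1 : (c.inner e v : ℂ) = 1 := by
    show dotProduct (star e) (E *ᵥ v) = 1
    rw [hEv]
    simp [e, dotProduct, Pi.single_apply, apply_ite]
  have h2 : (c.inner e e : ℂ) = E i i := by
    show dotProduct (star e) (E *ᵥ e) = E i i
    simp [e, Matrix.mulVec_single, dotProduct, Pi.single_apply, apply_ite]
  have h3 : (c.inner v v : ℂ).re = ((E⁻¹) i i).re := by
    show (dotProduct (star v) (E *ᵥ v)).re = _
    rw [hEv]
    have : dotProduct (star v) e = star (v i) := by
      simp [e, dotProduct_single]
    rw [this]
    have : v i = (E⁻¹) i i := by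
      simp [v, e, Matrix.mulVec_single]
    rw [this]
    simp [Complex.conj_re]
  have cs := @InnerProductSpace.Core.inner_mul_inner_self_le ℂ (Fin n → ℂ) _ _ _
      c.toCore e v
  have hinner : (@inner ℂ (Fin n → ℂ)
      (InnerProductSpace.Core.toPreInner' (c := c.toCore)) e v) = 1 := h1
  have hie : (@inner ℂ (Fin n → ℂ)
      (InnerProductSpace.Core.toPreInner' (c := c.toCore)) e e) = E i i := h2
  have hiv : (@inner ℂ (Fin n → ℂ)
      (InnerProductSpace.Core.toPreInner' (c := c.toCore)) v v).re
      = ((E⁻¹) i i).re := h3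
  have hvi : (@inner ℂ (Fin n → ℂ)
      (InnerProductSpace.Core.toPreInner' (c := c.toCore)) v e) = 1 := by
    rw [← InnerProductSpace.Core.inner_conj_symm, hinner]; simp
  rw [hinner, hvi, hie] at cs
  simp only [norm_one, one_mul, RCLike.re_to_complex] at cs
  rw [hiv] at cs
  exact cs

/-- For a positive definite Hermitian matrix `E`, the trace of the inverse of its
diagonal part is at most the trace of its inverse. -/
theorem trace_inv_diagonal_le {n : ℕ} (E : Matrix (Fin n) (Fin n) ℂ)
    (hE : E.PosDef) :
    ((Matrix.diagonal (fun i => E i i))⁻¹).trace.re ≤ (E⁻¹).trace.re := by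
  have hdiagpos : ∀ i, 0 < (E i i).re := by
    intro i
    have hne : (Pi.single i 1 : Fin n → ℂ) ≠ 0 := by
      intro h
      have := congrFun h i
      simp at this
    have h := hE.re_dotProduct_pos hne
    have heq : dotProduct (star (Pi.single i 1 : Fin n → ℂ))
        (E *ᵥ Pi.single i 1) = E i i := by
      simp [Matrix.mulVec_single, dotProduct, Pi.single_apply, apply_ite]
    rwa [heq] at h
  have hdiagreal : ∀ i, (E i i).im = 0 := by
    intro i
    have h := congrArg Complex.im (hE.isHermitian.apply i i)
    simp at h
    linarith
  have hLHS : ((Matrix.diagonal (fun i => E i i))⁻¹).trace.re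
      = ∑ i, ((E i i).re)⁻¹ := by
    have hinv : (Matrix.diagonal (fun i => E i i))⁻¹
        = Matrix.diagonal (fun i => (E i i)⁻¹) := by
      apply Matrix.inv_eq_right_inv
      rw [Matrix.diagonal_mul_diagonal]
      rw [show (fun i => E i i * (E i i)⁻¹) = fun _ => (1 : ℂ) from ?_,
        Matrix.diagonal_one]
      funext i
      exact mul_inv_cancel₀ (fun h => (hdiagpos i).ne' (by simp [h]))
    rw [hinv, Matrix.trace_diagonal, Complex.re_sum]
    congr 1
    ext i
    have : E i i = ((E i i).re : ℂ) := by
      rw [Complex.ext_iff]; simp [hdiagreal i]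
    rw [this, ← Complex.ofReal_inv]
    simp
  have hRHS : (E⁻¹).trace.re = ∑ i, ((E⁻¹) i i).re := by
    rw [Matrix.trace, Complex.re_sum]; rfl
  rw [hLHS, hRHS]
  apply Finset.sum_le_sum
  intro i _
  rw [inv_eq_one_div, div_le_iff₀ (hdiagpos i)]
  rw [mul_comm]
  exact one_le_diag_mul_inv_diag hE i
end

section
/- For a positive definite Hermitian matrix E, replacing E by its diagonal part does not decrease the log-determinant capacity expression: log det(I + c · Σ² (E ∘ I)) ≥ log det(I + c · Σ² E), for any c > 0 and nonnegative diagonal matrix Σ². -/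
open Matrix
open scoped ComplexOrder

lemma my_trace_eq_sum_eigenvalues {n : ℕ} {A : Matrix (Fin n) (Fin n) ℂ}
    (hA : A.IsHermitian) : A.trace = ∑ i, (hA.eigenvalues i : ℂ) := by
  conv_lhs => rw [hA.spectral_theorem]
  rw [Unitary.conjStarAlgAut_apply, Matrix.trace_mul_cycle, Unitary.star_mul_self_of_mem hA.eigenvectorUnitary.2, one_mul,
    Matrix.trace_diagonal]
  simp [Function.comp]

lemma my_amgm {n : ℕ} (μ : Fin n → ℝ) (hμ : ∀ i, 0 ≤ μ i) (hsum : ∑ i, μ i = n) :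
    ∏ i, μ i ≤ 1 := by
  rcases Nat.eq_zero_or_pos n with h | h
  · subst h; simp
  have hn : (0:ℝ) < n := by exact_mod_cast h
  have key := Real.geom_mean_le_arith_mean_weighted Finset.univ (fun _ => (n:ℝ)⁻¹) μ
    (fun i _ => by positivity) (by simp [Finset.card_univ, mul_comm]; field_simp)
    (fun i _ => hμ i)
  have hsum' : ∑ i : Fin n, (n:ℝ)⁻¹ * μ i = 1 := by
    rw [← Finset.mul_sum, hsum]; field_simp
  rw [hsum'] at key
  have hprod : ∏ i, μ i ^ ((n:ℝ)⁻¹) = (∏ i, μ i) ^ ((n:ℝ)⁻¹) := by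
    rw [← Real.finset_prod_rpow _ _ (fun i _ => hμ i)]
  rw [hprod] at key
  have hp0 : (0:ℝ) ≤ ∏ i, μ i := Finset.prod_nonneg fun i _ => hμ i
  have : ((∏ i, μ i) ^ ((n:ℝ)⁻¹)) ^ (n:ℝ) ≤ 1 ^ (n:ℝ) :=
    Real.rpow_le_rpow (Real.rpow_nonneg hp0 _) key (le_of_lt hn)
  rwa [← Real.rpow_mul hp0, inv_mul_cancel₀ (ne_of_gt hn), Real.rpow_one,
    Real.one_rpow] at this

/-- Hadamard's inequality for positive definite complex matrices. -/
lemma my_hadamard {n : ℕ} {M : Matrix (Fin n) (Fin n) ℂ} (hM : M.PosDef) :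
    M.det.re ≤ ∏ i, (M i i).re := by
  classical
  have hdiag : ∀ i, 0 < (M i i).re := by
    intro i
    have := hM.re_dotProduct_pos (x := Pi.single i 1) (by
      intro h; simpa using congrFun h i)
    simpa [dotProduct, Matrix.mulVec, Pi.single_apply, Finset.sum_ite_eq] using this
  set d : Fin n → ℝ := fun i => (Real.sqrt ((M i i).re))⁻¹ with hd
  have hd_pos : ∀ i, 0 < d i := fun i =>
    inv_pos.mpr (Real.sqrt_pos.mpr (hdiag i))
  set Δ : Matrix (Fin n) (Fin n) ℂ := Matrix.diagonal (fun i => (d i : ℂ)) with hΔ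
  have hΔH : Δᴴ = Δ := by
    have hstar : (star fun i => (d i : ℂ)) = fun i => (d i : ℂ) :=
      funext fun i => Complex.conj_ofReal (d i)
    rw [hΔ, Matrix.diagonal_conjTranspose, hstar]
  set N : Matrix (Fin n) (Fin n) ℂ := Δ * M * Δ with hN
  have hNpsd : N.PosSemidef := by
    have := hM.posSemidef.mul_mul_conjTranspose_same Δ
    rwa [hΔH] at this
  -- diagonal entries of N are 1
  have hMreal : ∀ i, M i i = ((M i i).re : ℂ) := fun i =>
    (hM.isHermitian.coe_re_apply_self i).symm
  have hNdiag : ∀ i, N i i = 1 := by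
    intro i
    have : N i i = (d i : ℂ) * (M i i) * (d i : ℂ) := by
      simp [hN, hΔ, Matrix.mul_apply, Matrix.diagonal_apply, Finset.sum_ite_eq,
        Finset.sum_ite_eq']
    rw [this, hMreal i]
    have : (d i : ℂ) * ((M i i).re : ℂ) * (d i : ℂ) = ((d i * d i * (M i i).re : ℝ) : ℂ) := by
      push_cast; ring
    rw [this]
    have hsq : d i * d i * (M i i).re = 1 := by
      simp only [hd]
      rw [← mul_inv, Real.mul_self_sqrt (le_of_lt (hdiag i))]
      exact inv_mul_cancel₀ (ne_of_gt (hdiag i))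
    rw [hsq, Complex.ofReal_one]
  -- trace of N
  have htrace : N.trace = (n : ℂ) := by
    rw [Matrix.trace]
    simp only [Matrix.diag_apply]
    rw [Finset.sum_congr rfl (fun i _ => hNdiag i)]
    simp
  have heig := my_trace_eq_sum_eigenvalues hNpsd.isHermitian
  have hsum : ∑ i, hNpsd.isHermitian.eigenvalues i = n := by
    have : ((∑ i, hNpsd.isHermitian.eigenvalues i : ℝ) : ℂ) = ((n:ℝ) : ℂ) := by
      push_cast
      rw [← heig, htrace]
    exact_mod_cast this
  have hprodle : ∏ i, hNpsd.isHermitian.eigenvalues i ≤ 1 :=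
    my_amgm _ (fun i => hNpsd.eigenvalues_nonneg i) hsum
  -- determinants
  have hdetN : N.det = ((∏ i, hNpsd.isHermitian.eigenvalues i : ℝ) : ℂ) := by
    rw [hNpsd.isHermitian.det_eq_prod_eigenvalues]; push_cast; rfl
  have hdetΔ : Δ.det = ((∏ i, d i : ℝ) : ℂ) := by
    simp [hΔ, Matrix.det_diagonal]
  have hdetfact : N.det = ((∏ i, d i : ℝ) : ℂ) * M.det * ((∏ i, d i : ℝ) : ℂ) := by
    rw [hN, Matrix.det_mul, Matrix.det_mul, hdetΔ]
  -- det M is a positive real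
  have hdetM : M.det = ((M.det.re : ℝ) : ℂ) := by
    have := hM.det_pos
    rw [RCLike.pos_iff] at this
    exact Complex.ext rfl (by simpa using this.2)
  -- so: (∏ d)² * M.det.re = ∏ eigenvalues ≤ 1
  have hfact : (∏ i, d i) * M.det.re * (∏ i, d i) = ∏ i, hNpsd.isHermitian.eigenvalues i := by
    have : ((∏ i, d i) * M.det.re * (∏ i, d i) : ℂ) =
        ((∏ i, hNpsd.isHermitian.eigenvalues i : ℝ) : ℂ) := by
      rw [← hdetN, hdetfact, ← hdetM]
      try push_cast
      try ring
    exact_mod_cast this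
  have hdd : ∀ i, d i * d i = ((M i i).re)⁻¹ := by
    intro i
    simp only [hd]
    rw [← mul_inv, Real.mul_self_sqrt (le_of_lt (hdiag i))]
  have hdprod : (∏ i, d i) * (∏ i, d i) = (∏ i, (M i i).re)⁻¹ := by
    rw [← Finset.prod_mul_distrib, ← Finset.prod_inv_distrib]
    exact Finset.prod_congr rfl fun i _ => hdd i
  have hkey : M.det.re * (∏ i, (M i i).re)⁻¹ ≤ 1 := by
    calc M.det.re * (∏ i, (M i i).re)⁻¹ = (∏ i, d i) * M.det.re * (∏ i, d i) := by
          rw [← hdprod]; ring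
      _ = ∏ i, hNpsd.isHermitian.eigenvalues i := hfact
      _ ≤ 1 := hprodle
  have hP : 0 < ∏ i, (M i i).re := Finset.prod_pos fun i _ => hdiag i
  calc M.det.re = (M.det.re * (∏ i, (M i i).re)⁻¹) * (∏ i, (M i i).re) := by
        field_simp
    _ ≤ 1 * (∏ i, (M i i).re) := by
        exact mul_le_mul_of_nonneg_right hkey (le_of_lt hP)
    _ = ∏ i, (M i i).re := one_mul _

/-- Replacing a positive definite Hermitian matrix by its diagonal part does not decrease
the log-determinant capacity expression `log det(I + c Σ² E)`. -/
theorem logdet_diagonal_ge {n : ℕ} (E : Matrix (Fin n) (Fin n) ℂ) (hE : E.PosDef)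
    (c : ℝ) (hc : 0 < c) (D : Fin n → ℝ) (hD : ∀ i, 0 ≤ D i) :
    Real.log ((1 + (c : ℂ) • (Matrix.diagonal (fun i => (D i : ℂ)) *
        Matrix.diagonal (fun i => E i i))).det.re) ≥
      Real.log ((1 + (c : ℂ) • (Matrix.diagonal (fun i => (D i : ℂ)) * E)).det.re) := by
  classical
  set S : Matrix (Fin n) (Fin n) ℂ := Matrix.diagonal (fun i => ((Real.sqrt (D i) : ℝ) : ℂ))
    with hS
  have hSS : S * S = Matrix.diagonal (fun i => (D i : ℂ)) := by
    rw [hS, Matrix.diagonal_mul_diagonal]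
    ext i j
    rcases eq_or_ne i j with rfl | hij
    · simp [Matrix.diagonal_apply_eq, ← Complex.ofReal_mul, Real.mul_self_sqrt (hD i)]
    · simp [Matrix.diagonal_apply_ne _ hij]
  have hSH : Sᴴ = S := by
    have hstar : (star fun i => ((Real.sqrt (D i) : ℝ) : ℂ)) =
        fun i => ((Real.sqrt (D i) : ℝ) : ℂ) :=
      funext fun i => Complex.conj_ofReal (Real.sqrt (D i))
    rw [hS, Matrix.diagonal_conjTranspose, hstar]
  set M : Matrix (Fin n) (Fin n) ℂ := 1 + (c : ℂ) • (S * E * S) with hM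
  -- determinant equality
  have hdet_eq : (1 + (c : ℂ) • (Matrix.diagonal (fun i => (D i : ℂ)) * E)).det = M.det := by
    have h1 : (1 : Matrix (Fin n) (Fin n) ℂ) + (c : ℂ) • (Matrix.diagonal (fun i => (D i : ℂ)) * E)
        = 1 + S * ((c : ℂ) • (S * E)) := by
      rw [Matrix.mul_smul, ← Matrix.mul_assoc, hSS]
    have h2 : M = 1 + ((c : ℂ) • (S * E)) * S := by
      rw [hM, Matrix.smul_mul, Matrix.mul_assoc]
    rw [h1, h2, Matrix.det_one_add_mul_comm]
  -- M is positive definite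
  have hMpd : M.PosDef := by
    have hpsd : ((c : ℂ) • (S * E * S)).PosSemidef := by
      have h := hE.posSemidef.mul_mul_conjTranspose_same
        (((Real.sqrt c : ℝ) : ℂ) • S)
      have heq : (((Real.sqrt c : ℝ) : ℂ) • S) * E * ((((Real.sqrt c : ℝ) : ℂ) • S))ᴴ
          = (c : ℂ) • (S * E * S) := by
        rw [Matrix.conjTranspose_smul, hSH]
        simp only [Matrix.smul_mul, Matrix.mul_smul, smul_smul, Matrix.mul_assoc]
        congr 1
        rw [RCLike.star_def, Complex.conj_ofReal, ← Complex.ofReal_mul,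
          Real.mul_self_sqrt (le_of_lt hc)]
      rwa [heq] at h
    have hone : (1 : Matrix (Fin n) (Fin n) ℂ).PosDef := Matrix.PosDef.one
    exact hone.add_posSemidef hpsd
  -- diagonal entries of M
  have hEreal : ∀ i, E i i = ((E i i).re : ℂ) := fun i =>
    (hE.isHermitian.coe_re_apply_self i).symm
  have hMdiag : ∀ i, (M i i).re = 1 + c * D i * (E i i).re := by
    intro i
    have hSES : (S * E * S) i i = ((Real.sqrt (D i) : ℝ) : ℂ) * E i i
        * ((Real.sqrt (D i) : ℝ) : ℂ) := by
      rw [hS, Matrix.mul_diagonal, Matrix.diagonal_mul]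
    have : M i i = 1 + (c : ℂ) * ((S * E * S) i i) := by
      simp [hM, Matrix.add_apply, Matrix.one_apply_eq, Matrix.smul_apply, smul_eq_mul]
    have hsq : Real.sqrt (D i) * Real.sqrt (D i) = D i := Real.mul_self_sqrt (hD i)
    have h2 : (1 : ℂ) + (c : ℂ) * (((Real.sqrt (D i) : ℝ) : ℂ) * ((E i i).re : ℂ)
        * ((Real.sqrt (D i) : ℝ) : ℂ))
        = ((1 + c * D i * (E i i).re : ℝ) : ℂ) := by
      calc (1 : ℂ) + (c : ℂ) * (((Real.sqrt (D i) : ℝ) : ℂ) * ((E i i).re : ℂ)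
          * ((Real.sqrt (D i) : ℝ) : ℂ))
          = ((1 + c * (Real.sqrt (D i) * Real.sqrt (D i)) * (E i i).re : ℝ) : ℂ) := by
            push_cast; ring
        _ = _ := by rw [hsq]
    rw [this, hSES, hEreal i, h2, Complex.ofReal_re]
    simp
  -- the diagonal side
  have hLHS : (1 + (c : ℂ) • (Matrix.diagonal (fun i => (D i : ℂ)) *
      Matrix.diagonal (fun i => E i i))).det
      = ((∏ i, (1 + c * D i * (E i i).re) : ℝ) : ℂ) := by
    rw [Matrix.diagonal_mul_diagonal]
    have h1 : (1 : Matrix (Fin n) (Fin n) ℂ) +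
        (c : ℂ) • Matrix.diagonal (fun i => (D i : ℂ) * E i i)
        = Matrix.diagonal (fun i => ((1 + c * D i * (E i i).re : ℝ) : ℂ)) := by
      rw [← Matrix.diagonal_one, ← Matrix.diagonal_smul, Matrix.diagonal_add]
      ext i j
      rcases eq_or_ne i j with rfl | hij
      · simp only [Matrix.diagonal_apply_eq, Pi.add_apply, Pi.smul_apply, smul_eq_mul]
        rw [hEreal i]
        push_cast
        simp [mul_assoc]
      · simp [Matrix.diagonal_apply_ne _ hij]
    rw [h1, Matrix.det_diagonal]
    push_cast
    rfl
  have hpos : ∀ i, 0 < 1 + c * D i * (E i i).re := by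
    intro i
    have hEii : 0 < (E i i).re := by
      have := hE.re_dotProduct_pos (x := Pi.single i 1) (by
        intro h; simpa using congrFun h i)
      simpa [dotProduct, Matrix.mulVec, Pi.single_apply, Finset.sum_ite_eq] using this
    have : 0 ≤ c * D i * (E i i).re :=
      mul_nonneg (mul_nonneg (le_of_lt hc) (hD i)) (le_of_lt hEii)
    linarith
  have hprodpos : 0 < ∏ i, (1 + c * D i * (E i i).re) :=
    Finset.prod_pos fun i _ => hpos i
  -- Hadamard
  have hhad : M.det.re ≤ ∏ i, (1 + c * D i * (E i i).re) := by
    calc M.det.re ≤ ∏ i, (M i i).re := my_hadamard hMpd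
      _ = ∏ i, (1 + c * D i * (E i i).re) := Finset.prod_congr rfl fun i _ => hMdiag i
  have hMdetpos : 0 < M.det.re := by
    have := hMpd.det_pos
    rw [RCLike.pos_iff] at this
    exact this.1
  rw [hdet_eq, hLHS]
  rw [Complex.ofReal_re]
  exact Real.log_le_log hMdetpos hhad
end

section
/- The function f(E) = log det(I + H E H*) is concave on the cone of positive semidefinite Hermitian matrices E. -/
open Matrix
open scoped ComplexOrder

lemma posDef_conj_of_isUnit {k : ℕ} {B S : Matrix (Fin k) (Fin k) ℂ}
    (hB : B.PosDef) (hS : IsUnit S) : (Sᴴ * B * S).PosDef := by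
  refine PosDef.of_dotProduct_mulVec_pos ?_ (fun x hx => ?_)
  · unfold Matrix.IsHermitian
    rw [conjTranspose_mul, conjTranspose_mul, conjTranspose_conjTranspose,
      hB.isHermitian.eq, Matrix.mul_assoc]
  · have hx' : S *ᵥ x ≠ 0 := by
      intro h
      exact hx ((Matrix.mulVec_injective_iff_isUnit.mpr hS).eq_iff.mp (by simpa using h))
    have := hB.dotProduct_mulVec_pos hx'
    rw [star_mulVec] at this
    rwa [← Matrix.mulVec_mulVec, ← Matrix.mulVec_mulVec, Matrix.dotProduct_mulVec]

open scoped MatrixOrder in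
lemma logdet_concave_posDef {k : ℕ} {A B : Matrix (Fin k) (Fin k) ℂ}
    (hA : A.PosDef) (hB : B.PosDef) {t : ℝ} (ht₀ : 0 ≤ t) (ht₁ : t ≤ 1) :
    t * Real.log A.det.re + (1 - t) * Real.log B.det.re ≤
      Real.log (((t : ℂ) • A + ((1 - t : ℝ) : ℂ) • B).det.re) := by
  set s : ℝ := 1 - t with hs
  set S := CFC.sqrt A with hSdef
  have hSH : S.IsHermitian := (Matrix.nonneg_iff_posSemidef.mp (CFC.sqrt_nonneg A)).1
  have hSS : S * S = A := CFC.sqrt_mul_sqrt_self A hA.posSemidef.nonneg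
  have hdetS : S.det * S.det = A.det := by rw [← det_mul, hSS]
  have hdetA : (0 : ℂ) < A.det := hA.det_pos
  have hSunit : IsUnit S := by
    apply (Matrix.isUnit_iff_isUnit_det _).mpr
    refine (Ne.isUnit ?_)
    intro h
    rw [h, mul_zero] at hdetS
    exact hdetA.ne' hdetS.symm
  have hSinvH : S⁻¹.IsHermitian := hSH.inv
  set C := S⁻¹ * B * S⁻¹ with hCdef
  have hC : C.PosDef := by
    have := posDef_conj_of_isUnit hB ((Matrix.isUnit_nonsing_inv_iff).mpr hSunit)
    simpa [hSinvH.eq] using this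
  have hSinv : S * S⁻¹ = 1 := Matrix.mul_nonsing_inv S ((Matrix.isUnit_iff_isUnit_det _).mp hSunit)
  have hinvS : S⁻¹ * S = 1 := Matrix.nonsing_inv_mul S ((Matrix.isUnit_iff_isUnit_det _).mp hSunit)
  have hSCS : S * C * S = B := by
    rw [hCdef]
    calc S * (S⁻¹ * B * S⁻¹) * S = (S * S⁻¹) * B * (S⁻¹ * S) := by
          simp only [Matrix.mul_assoc]
      _ = B := by rw [hSinv, hinvS, Matrix.one_mul, Matrix.mul_one]
  -- spectral theorem for C
  set U : Matrix (Fin k) (Fin k) ℂ := (hC.1.eigenvectorUnitary : Matrix (Fin k) (Fin k) ℂ) with hU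
  set lam := hC.1.eigenvalues with hlam
  have hUU : U * star U = 1 := (Matrix.mem_unitaryGroup_iff).mp hC.1.eigenvectorUnitary.2
  have hspec : C = U * diagonal (RCLike.ofReal ∘ lam) * star U := hC.1.spectral_theorem
  have hconv : (t : ℂ) • (1 : Matrix (Fin k) (Fin k) ℂ) + (s : ℂ) • C =
      U * diagonal (fun i => (t : ℂ) + (s : ℂ) * (lam i : ℂ)) * star U := by
    have h1 : (1 : Matrix (Fin k) (Fin k) ℂ) = U * diagonal (fun _ => (1:ℂ)) * star U := by
      rw [diagonal_one, Matrix.mul_one, hUU]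
    have h2 : diagonal (fun i => (t : ℂ) + (s : ℂ) * (lam i : ℂ)) =
        (t : ℂ) • diagonal (fun _ => (1:ℂ)) + (s : ℂ) • diagonal (RCLike.ofReal ∘ lam) := by
      rw [← Matrix.diagonal_smul, ← Matrix.diagonal_smul, diagonal_add]
      congr 1
      funext i
      simp [Function.comp]
    rw [hspec, h1, h2]
    simp only [Matrix.mul_add, Matrix.add_mul, Matrix.mul_smul, Matrix.smul_mul]
  have hdetUMU : ∀ M : Matrix (Fin k) (Fin k) ℂ, (U * M * star U).det = M.det := by
    intro M
    have : (U * M * star U).det = M.det * (U * star U).det := by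
      rw [det_mul, det_mul, det_mul]; ring
    rw [this, hUU, det_one, mul_one]
  have hdetconv : ((t : ℂ) • (1 : Matrix (Fin k) (Fin k) ℂ) + (s : ℂ) • C).det =
      ∏ i, ((t : ℂ) + (s : ℂ) * (lam i : ℂ)) := by
    rw [hconv, hdetUMU, det_diagonal]
  have hdetC : C.det = ∏ i, (lam i : ℂ) := hC.1.det_eq_prod_eigenvalues
  -- main matrix identity
  have hmain : (t : ℂ) • A + (s : ℂ) • B = S * ((t : ℂ) • 1 + (s : ℂ) • C) * S := by
    rw [Matrix.mul_add, Matrix.add_mul, Matrix.mul_smul, Matrix.mul_smul,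
      Matrix.smul_mul, Matrix.smul_mul, Matrix.mul_one, hSS, hSCS]
  have hdetB : B.det = A.det * C.det := by
    rw [← hSCS, det_mul, det_mul]
    rw [← hdetS]; ring
  have hdetmain : ((t : ℂ) • A + (s : ℂ) • B).det =
      A.det * ∏ i, ((t : ℂ) + (s : ℂ) * (lam i : ℂ)) := by
    rw [hmain, det_mul, det_mul, hdetconv, ← hdetS]; ring
  -- pass to real parts
  have hdetAre : A.det = ((A.det.re : ℝ) : ℂ) := by
    have him : A.det.im = 0 := by
      have := hdetA
      rw [Complex.lt_def] at this
      simpa using this.2.symm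
    exact Complex.ext (by simp) (by simp [him])
  have ha : 0 < A.det.re := by
    rw [Complex.lt_def] at hdetA; simpa using hdetA.1
  have hlampos : ∀ i, 0 < lam i := fun i => hC.eigenvalues_pos i
  have hs0 : 0 ≤ s := by simp [hs]; linarith
  have hqpos : ∀ i : Fin k, 0 < t + s * lam i := by
    intro i
    simp only [hs]
    rcases le_or_gt (lam i) 1 with h|h
    · have h1 : 0 ≤ t * (1 - lam i) := mul_nonneg ht₀ (by linarith)
      nlinarith [hlampos i]
    · have h1 : 0 ≤ (1 - t) * (lam i - 1) := mul_nonneg (by linarith) (by linarith)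
      nlinarith
  have hPpos : 0 < ∏ i, lam i := Finset.prod_pos (fun i _ => hlampos i)
  have hQpos : 0 < ∏ i, (t + s * lam i) := Finset.prod_pos (fun i _ => hqpos i)
  have hdetBre : B.det.re = A.det.re * ∏ i, lam i := by
    have : B.det = (((A.det.re * ∏ i, lam i : ℝ)) : ℂ) := by
      rw [hdetB, hdetC, hdetAre]; push_cast [Complex.ofReal_re]; ring
    rw [this, Complex.ofReal_re]
  have hdetMre : ((t : ℂ) • A + (s : ℂ) • B).det.re =
      A.det.re * ∏ i, (t + s * lam i) := by
    have : ((t : ℂ) • A + (s : ℂ) • B).det =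
        (((A.det.re * ∏ i, (t + s * lam i) : ℝ)) : ℂ) := by
      rw [hdetmain, hdetAre]; push_cast [Complex.ofReal_re]; ring
    rw [this, Complex.ofReal_re]
  rw [hdetBre, hdetMre, Real.log_mul ha.ne' hPpos.ne', Real.log_mul ha.ne' hQpos.ne',
    Real.log_prod (fun i _ => (hlampos i).ne'), Real.log_prod (fun i _ => (hqpos i).ne')]
  have key : ∀ i : Fin k, s * Real.log (lam i) ≤ Real.log (t + s * lam i) := by
    intro i
    have hconc := (strictConcaveOn_log_Ioi.concaveOn).2 (Set.mem_Ioi.mpr one_pos)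
      (Set.mem_Ioi.mpr (hlampos i)) ht₀ hs0 (by rw [hs]; ring)
    simpa using hconc
  have hsum : s * ∑ i, Real.log (lam i) ≤ ∑ i, Real.log (t + s * lam i) := by
    rw [Finset.mul_sum]
    exact Finset.sum_le_sum (fun i _ => key i)
  have hts : t + s = 1 := by rw [hs]; ring
  calc t * Real.log A.det.re + (1 - t) * (Real.log A.det.re + ∑ i, Real.log (lam i))
      = Real.log A.det.re + s * ∑ i, Real.log (lam i) := by rw [hs]; ring
    _ ≤ Real.log A.det.re + ∑ i, Real.log (t + s * lam i) := by linarith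

/-- The function `E ↦ log det(I + H E Hᴴ)` is concave on the cone of positive semidefinite
Hermitian matrices. -/
theorem logdet_concave {m n : ℕ} (H : Matrix (Fin m) (Fin n) ℂ)
    (E₁ E₂ : Matrix (Fin n) (Fin n) ℂ) (hE₁ : E₁.PosSemidef) (hE₂ : E₂.PosSemidef)
    (t : ℝ) (ht₀ : 0 ≤ t) (ht₁ : t ≤ 1) :
    t * Real.log ((1 + H * E₁ * Hᴴ).det.re) +
      (1 - t) * Real.log ((1 + H * E₂ * Hᴴ).det.re) ≤
    Real.log ((1 + H * ((t : ℂ) • E₁ + ((1 - t : ℝ) : ℂ) • E₂) * Hᴴ).det.re) := by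
  have hA : (1 + H * E₁ * Hᴴ).PosDef :=
    Matrix.PosDef.add_posSemidef Matrix.PosDef.one (hE₁.mul_mul_conjTranspose_same H)
  have hB : (1 + H * E₂ * Hᴴ).PosDef :=
    Matrix.PosDef.add_posSemidef Matrix.PosDef.one (hE₂.mul_mul_conjTranspose_same H)
  have hts : (t : ℂ) + ((1 - t : ℝ) : ℂ) = 1 := by push_cast; ring
  have hcomb : 1 + H * ((t : ℂ) • E₁ + ((1 - t : ℝ) : ℂ) • E₂) * Hᴴ =
      (t : ℂ) • (1 + H * E₁ * Hᴴ) + ((1 - t : ℝ) : ℂ) • (1 + H * E₂ * Hᴴ) := by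
    have h1 : H * ((t : ℂ) • E₁ + ((1 - t : ℝ) : ℂ) • E₂) * Hᴴ =
        (t : ℂ) • (H * E₁ * Hᴴ) + ((1 - t : ℝ) : ℂ) • (H * E₂ * Hᴴ) := by
      simp [Matrix.mul_add, Matrix.add_mul, Matrix.mul_smul, Matrix.smul_mul]
    have h2 : (t : ℂ) • (1 : Matrix (Fin m) (Fin m) ℂ) + ((1 - t : ℝ) : ℂ) • 1 = 1 := by
      rw [← add_smul, hts, one_smul]
    rw [h1]
    nth_rewrite 1 [← h2]
    module
  rw [hcomb]
  exact logdet_concave_posDef hA hB ht₀ ht₁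
end

section
/- Let λ₁ ≥ λ₂ ≥ ... ≥ λ_r > 0 and let e₁,...,e_r > 0 satisfy, for each i, the stationarity equation 1/η − γσ²N/(B eᵢ²) − (ν/(ln2·T))·(λᵢ²/σ_c²)/(1 + λᵢ²eᵢ/(σ_c²τ)) = 0, where η, σ², N, B, T, σ_c², τ > 0 and γ, ν ≥ 0. Then e₁ ≥ e₂ ≥ ... ≥ e_r. -/
/-- Ordering of optimal power allocations: if `λ₁ ≥ ... ≥ λ_r > 0` and each `eᵢ > 0`
satisfies the KKT stationarity equation, then `e₁ ≥ e₂ ≥ ... ≥ e_r`. -/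
theorem power_allocation_ordered {r : ℕ} (lam e : Fin r → ℝ)
    (hlam_pos : ∀ i, 0 < lam i) (hlam : ∀ i j : Fin r, i ≤ j → lam j ≤ lam i)
    (he : ∀ i, 0 < e i)
    (η σsq N B T σc τ : ℝ) (hη : 0 < η) (hσ : 0 < σsq) (hN : 0 < N) (hB : 0 < B)
    (hT : 0 < T) (hσc : 0 < σc) (hτ : 0 < τ)
    (γ ν : ℝ) (hγ : 0 ≤ γ) (hν : 0 ≤ ν)
    (hstat : ∀ i, 1 / η - γ * σsq * N / (B * (e i) ^ 2) -
      (ν / (Real.log 2 * T)) * (((lam i) ^ 2 / σc) / (1 + (lam i) ^ 2 * e i / (σc * τ))) = 0) :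
    ∀ i j : Fin r, i ≤ j → e j ≤ e i := by
  intro i j hij
  by_contra h
  push_neg at h
  have hlamji := hlam i j hij
  have hli := hlam_pos i
  have hlj := hlam_pos j
  have hei := he i
  have hej := he j
  have hlog2 : (0:ℝ) < Real.log 2 := Real.log_pos (by norm_num)
  set c := ν / (Real.log 2 * T) with hcdef
  have hc0 : 0 ≤ c := div_nonneg hν (by positivity)
  have hdi : 0 < σc / (lam i)^2 + e i / τ := by positivity
  have hdj : 0 < σc / (lam j)^2 + e j / τ := by positivity
  have hdij : σc / (lam i)^2 + e i / τ < σc / (lam j)^2 + e j / τ := by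
    have h1 : σc / (lam i)^2 ≤ σc / (lam j)^2 := by
      apply div_le_div_of_nonneg_left hσc.le (by positivity)
      nlinarith
    have h2 : e i / τ < e j / τ := by gcongr
    linarith
  have hArw : ∀ k : Fin r, ((lam k)^2 / σc) / (1 + (lam k)^2 * e k / (σc * τ))
      = 1 / (σc/(lam k)^2 + e k / τ) := by
    intro k
    have hk := hlam_pos k
    have hek := he k
    rw [div_eq_div_iff (by positivity) (by positivity)]
    field_simp
  have hAij : 1 / (σc / (lam j)^2 + e j / τ) < 1 / (σc / (lam i)^2 + e i / τ) :=
    one_div_lt_one_div_of_lt hdi hdij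
  have hsi := hstat i
  have hsj := hstat j
  rw [hArw i] at hsi
  rw [hArw j] at hsj
  rcases lt_or_eq_of_le hγ with hγpos | hγ0
  · have hterm : γ * σsq * N / (B * (e j)^2) < γ * σsq * N / (B * (e i)^2) := by
      apply div_lt_div_of_pos_left (by positivity) (by positivity)
      nlinarith [mul_pos (sub_pos.2 h) (by positivity : (0:ℝ) < e i + e j)]
    linarith [mul_le_mul_of_nonneg_left hAij.le hc0]
  · subst hγ0
    have z : ∀ x : ℝ, (0:ℝ) * σsq * N / x = 0 := by intro x; simp
    rw [z] at hsi hsj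
    have hη1 : 0 < 1 / η := by positivity
    have hc_pos : 0 < c := by
      by_contra hc
      push_neg at hc
      have : c * (1 / (σc / (lam i)^2 + e i / τ)) ≤ 0 :=
        mul_nonpos_of_nonpos_of_nonneg hc (by positivity)
      linarith
    have := mul_lt_mul_of_pos_left hAij hc_pos
    linarith
end

section
/- If e₁,...,e_r > 0 satisfy the ISAC stationarity equations with dual variables γ ≥ 0, ν ≥ 0, and e_{r+1} = √(ηγσ²N/B), then e_r ≥ e_{r+1}; that is, ISAC subchannels receive at least as much energy as sensing-only subchannels. -/
/-- ISAC subchannels receive at least as much energy as sensing-only subchannels: if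
`e_r > 0` satisfies the ISAC stationarity equation and `e_{r+1} = √(ηγσ²N/B)`, then
`e_{r+1} ≤ e_r`. -/
theorem isac_ge_sensing_energy (η σsq N B T σc τ lam : ℝ)
    (hη : 0 < η) (hσ : 0 < σsq) (hN : 0 < N) (hB : 0 < B) (hT : 0 < T)
    (hσc : 0 < σc) (hτ : 0 < τ) (hlam : 0 < lam)
    (γ ν : ℝ) (hγ : 0 ≤ γ) (hν : 0 ≤ ν)
    (er : ℝ) (her : 0 < er)
    (hstat : 1 / η - γ * σsq * N / (B * er ^ 2) =
      (ν / (Real.log 2 * T)) * ((lam ^ 2 / σc) / (1 + lam ^ 2 * er / (σc * τ))))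
    (erp : ℝ) (herp : erp = Real.sqrt (η * γ * σsq * N / B)) :
    erp ≤ er := by
  have hlog : 0 < Real.log 2 := Real.log_pos (by norm_num)
  have hden : 0 < 1 + lam ^ 2 * er / (σc * τ) := by positivity
  have hrhs : 0 ≤ (ν / (Real.log 2 * T)) * ((lam ^ 2 / σc) / (1 + lam ^ 2 * er / (σc * τ))) := by
    positivity
  have h1 : γ * σsq * N / (B * er ^ 2) ≤ 1 / η := by linarith [hstat ▸ hrhs]
  have her2 : η * γ * σsq * N / B ≤ er ^ 2 := by
    rw [div_le_div_iff₀ (by positivity) hη] at h1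
    rw [div_le_iff₀ hB]
    nlinarith [pow_pos her 2]
  calc erp = Real.sqrt (η * γ * σsq * N / B) := herp
    _ ≤ Real.sqrt (er ^ 2) := Real.sqrt_le_sqrt her2
    _ = er := by rw [Real.sqrt_sq her.le]
end
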